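/- A nonzero Hermitian positive semidefinite n×n complex matrix Y (with n > 1) has rank one if and only if every 2×2 principal minor of Y, i.e. Y_{ii} Y_{jj} - Y_{ij} Y_{ji} for all i ≠ j, equals zero. -/

import Mathlib

open scoped ComplexOrder in
theorem rank_one_iff_principal_minors {n : ℕ} (hn : 1 < n)
    (Y : Matrix (Fin n) (Fin n) ℂ) (hH : Y.IsHermitian) (hP : Y.PosSemidef) (hY : Y ≠ 0) :
    Y.rank = 1 ↔ ∀ i j : Fin n, i ≠ j → Y i i * Y j j - Y i j * Y j i = 0 := by
  classical
  obtain ⟨B, hB⟩ : ∃ B : Matrix (Fin n) (Fin n) ℂ, Y = B.conjTranspose * B := by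
    open scoped MatrixOrder in exact CStarAlgebra.nonneg_iff_eq_star_mul_self.mp hP.nonneg
  set b : Fin n → EuclideanSpace ℂ (Fin n) := fun j => (WithLp.equiv 2 _).symm (fun l => B l j)
    with hbdef
  have hYe : ∀ i j, Y i j = (inner ℂ (b i) (b j) : ℂ) := by
    intro i j
    rw [hB]
    rw [Matrix.mul_apply, PiLp.inner_apply]
    refine Finset.sum_congr rfl fun l _ => ?_
    rw [Matrix.conjTranspose_apply, RCLike.inner_apply]
    exact mul_comm _ _
  constructor
  · -- rank = 1 → minors vanish
    intro h1 i j hij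
    have hB1 : B.rank = 1 := by
      rw [← Matrix.rank_conjTranspose_mul_self B, ← hB, h1]
    rw [Matrix.rank_eq_finrank_span_cols] at hB1
    obtain ⟨v, hv0, hv⟩ := finrank_eq_one_iff'.mp hB1
    have hcol : ∀ j, ∃ c : ℂ, ∀ l, B l j = c * (v : Fin n → ℂ) l := by
      intro j
      obtain ⟨c, hc⟩ := hv ⟨B.transpose j, Submodule.subset_span (Set.mem_range_self j)⟩
      refine ⟨c, fun l => ?_⟩
      have := congrFun (congrArg Subtype.val hc) l
      simpa using this.symm
    choose c hc using hcol
    have hfac : ∀ i j, Y i j =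
        (starRingEnd ℂ) (c i) * c j * ∑ l, (starRingEnd ℂ) ((v : Fin n → ℂ) l) * (v : Fin n → ℂ) l := by
      intro i j
      rw [hB]
      simp only [Matrix.mul_apply, Matrix.conjTranspose_apply, hc]
      rw [Finset.mul_sum]
      refine Finset.sum_congr rfl fun l _ => ?_
      simp only [starRingEnd_apply, star_mul']
      ring
    rw [hfac i i, hfac i j, hfac j i, hfac j j]
    ring
  · -- minors vanish → rank = 1
    intro h
    have hk : ∃ k, b k ≠ 0 := by
      by_contra hc
      push_neg at hc
      apply hY
      ext i j
      rw [hYe i j, hc i]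
      simp
    obtain ⟨k, hk⟩ := hk
    have hr : ∀ j, ∃ r : ℂ, b j = r • b k := by
      intro j
      by_cases hj0 : b j = 0
      · exact ⟨0, by simp [hj0]⟩
      by_cases hjk : j = k
      · exact ⟨1, by simp [hjk]⟩
      have hm := h k j (fun hkj => hjk hkj.symm)
      rw [sub_eq_zero, hYe k k, hYe j j, hYe k j, hYe j k,
        inner_self_eq_norm_sq_to_K, inner_self_eq_norm_sq_to_K,
        ← inner_conj_symm (b j) (b k), RCLike.mul_conj] at hm
      have hm' : (‖b k‖ * ‖b j‖) ^ 2 = ‖(inner ℂ (b k) (b j) : ℂ)‖ ^ 2 := by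
        have h2 : (((‖b k‖ * ‖b j‖) ^ 2 : ℝ) : ℂ) = ((‖(inner ℂ (b k) (b j) : ℂ)‖ ^ 2 : ℝ) : ℂ) := by
          push_cast
          rw [mul_pow]
          exact_mod_cast hm
        exact_mod_cast h2
      have hnorm : ‖(inner ℂ (b k) (b j) : ℂ)‖ = ‖b k‖ * ‖b j‖ := by
        nlinarith [norm_nonneg (b k), norm_nonneg (b j),
          norm_nonneg ((inner ℂ (b k) (b j)) : ℂ), hm',
          mul_nonneg (norm_nonneg (b k)) (norm_nonneg (b j))]
      obtain ⟨r, -, hrr⟩ := (norm_inner_eq_norm_iff (𝕜 := ℂ) hk hj0).mp hnorm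
      exact ⟨r, hrr⟩
    choose r hr using hr
    have hfac : ∀ i j, Y i j = ((starRingEnd ℂ) (r i) * (inner ℂ (b k) (b k) : ℂ)) * r j := by
      intro i j
      rw [hYe i j, hr i, hr j, inner_smul_left, inner_smul_right]
      ring
    have hW : Y = Matrix.vecMulVec (fun i => (starRingEnd ℂ) (r i) * (inner ℂ (b k) (b k) : ℂ)) r := by
      ext i j
      rw [Matrix.vecMulVec_apply, hfac i j]
    have hle : Y.rank ≤ 1 := by
      calc Y.rank = (Matrix.replicateCol (Fin 1) (fun i => (starRingEnd ℂ) (r i) * (inner ℂ (b k) (b k) : ℂ))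
              * Matrix.replicateRow (Fin 1) r).rank := by rw [hW, Matrix.vecMulVec_eq (Fin 1)]; rfl
        _ ≤ (Matrix.replicateCol (Fin 1) (fun i => (starRingEnd ℂ) (r i) * (inner ℂ (b k) (b k) : ℂ))).rank :=
            Matrix.rank_mul_le_left _ _
        _ ≤ Fintype.card (Fin 1) := Matrix.rank_le_card_width _
        _ = 1 := by simp
    have hne : Y.rank ≠ 0 := by
      intro h0
      apply hY
      rw [Matrix.rank, Submodule.finrank_eq_zero, LinearMap.range_eq_bot] at h0
      ext i j
      have h1 : Y.mulVec (Pi.single j 1) = 0 := by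
        rw [← Matrix.mulVecLin_apply, h0]; rfl
      have := congrFun h1 i
      simpa [Matrix.mulVec, dotProduct, Pi.single_apply] using this
    omega
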